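/- Let Z be a Dedekind domain with fraction field Q, and let P_1(t),…,P_ℓ(t) ∈ Z[t] be ℓ ≥ 2 nonzero polynomials, coprime in Q[t], satisfying: (AV) no non-unit of Z divides all values P_1(z),…,P_ℓ(z) for all z ∈ Z. Let δ ∈ Z be a nonzero element of Z lying in the ideal P_1·Z[t] + ⋯ + P_ℓ·Z[t], let Q_1,…,Q_r be the prime ideals of Z dividing the principal ideal δZ, let 𝔦 be the ideal of Z generated by all values P_i(z) (z ∈ Z, 1 ≤ i ≤ ℓ), and for each i let g_i ≥ 0 be the exponent of Q_i in the prime ideal factorization of 𝔦 (i.e., the largest integer g with 𝔦 ⊆ Q_i^g). Let ω ∈ Z be any multiple of δ and let α ∈ Z be an element such that for each i = 1,…,r, not all of P_1(α),…,P_ℓ(α) lie in Q_i^{g_i+1}. Then for every z ∈ Z, the elements P_1(α + zω),…,P_ℓ(α + zω) are coprime in Z. -/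
import Mathlib

open UniqueFactorizationMonoid

theorem dedekind_arithmetic_progression_coprime_values
    (Z : Type*) [CommRing Z] [IsDomain Z] [IsDedekindDomain Z]
    (ℓ : ℕ) (hℓ : 2 ≤ ℓ)
    (P : Fin ℓ → Polynomial Z)
    (hne : ∀ i, P i ≠ 0)
    (hcop : ∀ d : Polynomial (FractionRing Z),
      (∀ i, d ∣ (P i).map (algebraMap Z (FractionRing Z))) → IsUnit d)
    (hAV : ∀ a : Z, (∀ z : Z, ∀ i, a ∣ (P i).eval z) → IsUnit a)
    (δ : Z) (hδ0 : δ ≠ 0)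
    (hδ : (Polynomial.C δ : Polynomial Z) ∈ Ideal.span (Set.range P))
    (r : ℕ) (Q : Fin r → Ideal Z)
    (hQprime : ∀ i, (Q i).IsPrime) (hQbot : ∀ i, Q i ≠ ⊥)
    -- `Q_1, …, Q_r` are exactly the prime ideals dividing the principal ideal `δZ`
    (hQdiv : ∀ I : Ideal Z, I.IsPrime → I ≠ ⊥ →
      (Ideal.span {δ} ≤ I ↔ ∃ i, I = Q i))
    -- `𝔦` is the ideal generated by all the values `P i z`
    (𝔦 : Ideal Z)
    (h𝔦 : 𝔦 = Ideal.span {x : Z | ∃ (z : Z) (i : Fin ℓ), x = (P i).eval z})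
    -- `g i` is the exponent of `Q i` in the prime factorization of `𝔦`
    (g : Fin r → ℕ)
    (hg : ∀ i, 𝔦 ≤ (Q i) ^ (g i) ∧ ¬ 𝔦 ≤ (Q i) ^ (g i + 1))
    (ω : Z) (hω : δ ∣ ω)
    (α : Z)
    (hα : ∀ i : Fin r, ∃ j : Fin ℓ, (P j).eval α ∉ (Q i) ^ (g i + 1)) :
    ∀ z : Z, ∀ d : Z, (∀ j, d ∣ (P j).eval (α + z * ω)) → IsUnit d := by
  classical
  intro z d hd
  set β := α + z * ω with hβ
  -- δ lies in every ideal containing all the values `P j β`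
  have hδmem : ∀ I : Ideal Z, (∀ j, (P j).eval β ∈ I) → δ ∈ I := by
    intro I hI
    have h1 : Ideal.map (Polynomial.evalRingHom β) (Ideal.span (Set.range P)) ≤ I := by
      rw [Ideal.map_span, Ideal.span_le]
      rintro x ⟨y, ⟨j, rfl⟩, rfl⟩
      simpa using hI j
    have h2 := Ideal.mem_map_of_mem (Polynomial.evalRingHom β) hδ
    simpa using h1 h2
  have hdδ : d ∣ δ := by
    rw [← Ideal.mem_span_singleton]
    exact hδmem _ (fun j => Ideal.mem_span_singleton.mpr (hd j))
  have hd0 : d ≠ 0 := by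
    rintro rfl
    exact hδ0 (zero_dvd_iff.mp hdδ)
  -- δ divides α - β
  have hδαβ : δ ∣ α - β := by
    have : α - β = z * (-ω) := by rw [hβ]; ring
    rw [this]
    exact Dvd.dvd.mul_left (hω.neg_right) z
  -- key step: for each i, some value `P j β` is not in `Q i ^ (g i + 1)`
  have key : ∀ i : Fin r, ∃ j, (P j).eval β ∉ Q i ^ (g i + 1) := by
    intro i
    by_contra h
    push_neg at h
    have hδQ : δ ∈ Q i ^ (g i + 1) := hδmem _ h
    obtain ⟨j, hj⟩ := hα i
    apply hj
    have hdvd : δ ∣ (P j).eval α - (P j).eval β :=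
      hδαβ.trans (Polynomial.sub_dvd_eval_sub α β (P j))
    obtain ⟨c, hc⟩ := hdvd
    have hsub : (P j).eval α - (P j).eval β ∈ Q i ^ (g i + 1) := by
      rw [hc]; exact Ideal.mul_mem_right c _ hδQ
    have := Ideal.add_mem _ hsub (h j)
    simpa using this
  -- δ ∈ 𝔦, hence 𝔦 ≠ ⊥
  have hδ𝔦 : δ ∈ 𝔦 := by
    rw [h𝔦]
    exact hδmem _ (fun j => Ideal.subset_span ⟨β, j, rfl⟩)
  have h𝔦0 : 𝔦 ≠ ⊥ := by
    intro h0
    rw [h0, Ideal.mem_bot] at hδ𝔦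
    exact hδ0 hδ𝔦
  have hspan0 : Ideal.span {d} ≠ ⊥ := by
    simpa [Ideal.span_singleton_eq_bot] using hd0
  -- 𝔦 is contained in the principal ideal (d)
  have hle : 𝔦 ≤ Ideal.span {d} := by
    rw [← Ideal.dvd_iff_le,
      dvd_iff_normalizedFactors_le_normalizedFactors hspan0 h𝔦0, Multiset.le_iff_count]
    intro p
    by_cases hp : p ∈ normalizedFactors (Ideal.span {d})
    · have hpprime : Prime p := prime_of_normalized_factor p hp
      haveI hpP : p.IsPrime := Ideal.isPrime_of_prime hpprime
      have hp0 : p ≠ ⊥ := hpprime.ne_zero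
      -- p contains d, hence δ, hence p = Q i
      have hpd : d ∈ p := by
        have h2 := dvd_of_mem_normalizedFactors hp
        rw [Ideal.dvd_iff_le] at h2
        exact h2 (Ideal.mem_span_singleton_self d)
      have hpδ : Ideal.span {δ} ≤ p := by
        rw [Ideal.span_singleton_le_iff_mem]
        obtain ⟨k, hk⟩ := hdδ
        rw [hk]
        exact Ideal.mul_mem_right k _ hpd
      obtain ⟨i, rfl⟩ := (hQdiv p hpP hp0).mp hpδ
      haveI : (Q i).IsPrime := hQprime i
      have hcount𝔦 : (normalizedFactors 𝔦).count (Q i) = g i :=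
        Ideal.count_normalizedFactors_eq (hg i).1 (hg i).2
      rw [hcount𝔦]
      by_contra hgt
      push_neg at hgt
      have hle' : ((g i + 1 : ℕ) : ℕ∞) ≤ emultiplicity (Q i) (Ideal.span {d}) := by
        rw [emultiplicity_eq_count_normalizedFactors hpprime.irreducible hspan0,
          normalize_eq]
        exact_mod_cast hgt
      have hdvd : Q i ^ (g i + 1) ∣ Ideal.span {d} := pow_dvd_of_le_emultiplicity hle'
      rw [Ideal.dvd_iff_le] at hdvd
      obtain ⟨j, hj⟩ := key i
      exact hj (hdvd (Ideal.mem_span_singleton.mpr (hd j)))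
    · simp [Multiset.count_eq_zero_of_notMem hp]
  -- conclude via the (AV) hypothesis
  apply hAV d
  intro z' i
  rw [← Ideal.mem_span_singleton]
  exact hle (by rw [h𝔦]; exact Ideal.subset_span ⟨z', i, rfl⟩)
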